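/- Let p(x) = ∑_{l=k}^{n+k} G_l^k(x) x^{n+k−l}. Then for every j with 0 ≤ j ≤ n+1, the j-th derivative of p is p^{(j)}(x) = ((n+k+1)!/(n+k+1−j)!) ∑_{l=k+j}^{n+k} G_{l−j}^k(x) x^{n+k−l}. -/

import Mathlib

open Polynomial Finset

/-- Formal exponential series `e^t` with coefficients in `ℚ[X]`. -/
noncomputable def expPS : PowerSeries (Polynomial ℚ) :=
  PowerSeries.mk fun n => Polynomial.C ((n.factorial : ℚ)⁻¹)

/-- Formal series `e^{xt}` with coefficients in `ℚ[X]`. -/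
noncomputable def expXPS : PowerSeries (Polynomial ℚ) :=
  PowerSeries.mk fun n => Polynomial.C ((n.factorial : ℚ)⁻¹) * Polynomial.X ^ n

/-- `G k n` is the Genocchi polynomial `G_n^{(k)}` of order `k`:
`∑ G_n^k(x) t^n/n! = (2t/(e^t+1))^k e^{xt}`, stated without division. -/
def IsGenocchi (G : ℕ → ℕ → Polynomial ℚ) : Prop :=
  ∀ k : ℕ,
    (PowerSeries.mk fun n => Polynomial.C ((n.factorial : ℚ)⁻¹) * G k n) * (expPS + 1) ^ k
      = (2 * PowerSeries.X) ^ k * expXPS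

/-- `E k n` is the Euler polynomial `E_n^{(k)}` of order `k`:
`∑ E_n^k(x) t^n/n! = (2/(e^t+1))^k e^{xt}`, stated without division. -/
def IsEuler (E : ℕ → ℕ → Polynomial ℚ) : Prop :=
  ∀ k : ℕ,
    (PowerSeries.mk fun n => Polynomial.C ((n.factorial : ℚ)⁻¹) * E k n) * (expPS + 1) ^ k
      = 2 ^ k * expXPS

/-- `B k n` is the Bernoulli polynomial `B_n^{(k)}` of order `k`:
`∑ B_n^k(x) t^n/n! = (t/(e^t-1))^k e^{xt}`, stated without division. -/
def IsBernoulli (B : ℕ → ℕ → Polynomial ℚ) : Prop :=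
  ∀ k : ℕ,
    (PowerSeries.mk fun n => Polynomial.C ((n.factorial : ℚ)⁻¹) * B k n) * (expPS - 1) ^ k
      = PowerSeries.X ^ k * expXPS

/-- coefficientwise derivative on power series over `ℚ[X]` -/
noncomputable def Dmap (f : PowerSeries (Polynomial ℚ)) : PowerSeries (Polynomial ℚ) :=
  PowerSeries.mk fun m => Polynomial.derivative (PowerSeries.coeff m f)

lemma Dmap_mul_right (f g : PowerSeries (Polynomial ℚ))
    (hg : ∀ m, Polynomial.derivative (PowerSeries.coeff m g) = 0) :
    Dmap (f * g) = Dmap f * g := by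
  apply PowerSeries.ext; intro m
  simp only [Dmap, PowerSeries.coeff_mk, PowerSeries.coeff_mul]
  rw [derivative_sum]
  apply Finset.sum_congr rfl
  intro x hx
  rw [derivative_mul, hg, mul_zero, add_zero]

lemma Dmap_mul_left (f g : PowerSeries (Polynomial ℚ))
    (hg : ∀ m, Polynomial.derivative (PowerSeries.coeff m g) = 0) :
    Dmap (g * f) = g * Dmap f := by
  rw [mul_comm, Dmap_mul_right f g hg, mul_comm]

lemma expPS_eq : expPS = PowerSeries.map (Polynomial.C (R := ℚ))
    (PowerSeries.mk fun n => ((n.factorial : ℚ)⁻¹)) := by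
  ext m; simp [expPS, PowerSeries.coeff_map]

lemma const_coeffs (k : ℕ) (m : ℕ) :
    Polynomial.derivative (PowerSeries.coeff m ((expPS + 1) ^ k)) = 0 := by
  rw [expPS_eq, show (1 : PowerSeries (Polynomial ℚ))
      = PowerSeries.map (Polynomial.C (R := ℚ)) 1 from (map_one _).symm,
    ← map_add, ← map_pow, PowerSeries.coeff_map, derivative_C]

lemma twoX_coeffs (k : ℕ) (m : ℕ) :
    Polynomial.derivative (PowerSeries.coeff m ((2 * PowerSeries.X) ^ k
      : PowerSeries (Polynomial ℚ))) = 0 := by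
  rw [show ((2 * PowerSeries.X) ^ k : PowerSeries (Polynomial ℚ))
      = PowerSeries.map (Polynomial.C (R := ℚ)) ((2 * PowerSeries.X) ^ k) by
        rw [map_pow, map_mul, PowerSeries.map_X, map_ofNat],
    PowerSeries.coeff_map, derivative_C]

lemma Dmap_expXPS : Dmap expXPS = PowerSeries.X * expXPS := by
  ext m
  cases m with
  | zero => simp [Dmap, expXPS, PowerSeries.coeff_mk]
  | succ m =>
    rw [PowerSeries.coeff_succ_X_mul]
    simp only [Dmap, PowerSeries.coeff_mk, expXPS, derivative_mul, derivative_C, zero_mul,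
      derivative_X_pow, zero_add]
    rw [Nat.add_sub_cancel, ← mul_assoc, ← Polynomial.C_mul]
    congr 1
    have h : (m.factorial : ℚ) ≠ 0 := Nat.cast_ne_zero.mpr m.factorial_ne_zero
    rw [Nat.factorial_succ]
    push_cast
    field_simp

lemma expPS1_ne_zero (k : ℕ) : ((expPS + 1) ^ k : PowerSeries (Polynomial ℚ)) ≠ 0 := by
  intro h
  have h0 : PowerSeries.constantCoeff ((expPS + 1) ^ k : PowerSeries (Polynomial ℚ))
      = 2 ^ k := by
    rw [map_pow, map_add, map_one]
    have : PowerSeries.constantCoeff expPS = 1 := by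
      simp [expPS, ← PowerSeries.coeff_zero_eq_constantCoeff]
    rw [this]; norm_num
  rw [h, map_zero] at h0
  exact (by norm_num : (2:Polynomial ℚ)^k ≠ 0) h0.symm

lemma expPS1_isUnit (k : ℕ) : IsUnit ((expPS + 1) ^ k : PowerSeries (Polynomial ℚ)) := by
  rw [PowerSeries.isUnit_iff_constantCoeff, map_pow, map_add, map_one]
  have : PowerSeries.constantCoeff expPS = 1 := by
    simp [expPS, ← PowerSeries.coeff_zero_eq_constantCoeff]
  rw [this]
  have h2 : ((1:Polynomial ℚ) + 1) = Polynomial.C 2 := by rw [map_ofNat]; norm_num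
  rw [h2, ← Polynomial.C_pow]
  exact (Polynomial.isUnit_C).2 (by norm_num)

lemma genocchi_vanish (G : ℕ → ℕ → Polynomial ℚ) (hG : IsGenocchi G) (k m : ℕ) (hm : m < k) :
    G k m = 0 := by
  obtain ⟨u, hu⟩ := expPS1_isUnit k
  have key : PowerSeries.X ^ k ∣
      (PowerSeries.mk fun n => Polynomial.C ((n.factorial : ℚ)⁻¹) * G k n) := by
    have h2 : ((2 * PowerSeries.X) ^ k : PowerSeries (Polynomial ℚ))
        = 2 ^ k * PowerSeries.X ^ k := by rw [mul_pow]
    refine ⟨2 ^ k * expXPS * (↑u⁻¹), ?_⟩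
    have := hG k
    rw [← hu] at this
    calc (PowerSeries.mk fun n => Polynomial.C ((n.factorial : ℚ)⁻¹) * G k n)
        = (PowerSeries.mk fun n => Polynomial.C ((n.factorial : ℚ)⁻¹) * G k n) * ↑u * ↑u⁻¹ := by
          rw [mul_assoc, Units.mul_inv, mul_one]
      _ = (2 * PowerSeries.X) ^ k * expXPS * ↑u⁻¹ := by rw [this]
      _ = PowerSeries.X ^ k * (2 ^ k * expXPS * ↑u⁻¹) := by rw [h2]; ring
  have := (PowerSeries.X_pow_dvd_iff.mp key) m hm
  rw [PowerSeries.coeff_mk] at this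
  have hC : (Polynomial.C ((m.factorial : ℚ)⁻¹)) ≠ 0 := by
    simp [Nat.factorial_ne_zero]
  exact (mul_eq_zero.mp this).resolve_left hC

lemma genocchi_deriv (G : ℕ → ℕ → Polynomial ℚ) (hG : IsGenocchi G) (k m : ℕ) :
    Polynomial.derivative (G k (m + 1)) = Polynomial.C ((m : ℚ) + 1) * G k m := by
  have h := congrArg Dmap (hG k)
  rw [Dmap_mul_right _ _ (const_coeffs k), Dmap_mul_left _ _ (twoX_coeffs k),
    Dmap_expXPS] at h
  have h2 : (Dmap (PowerSeries.mk fun n => Polynomial.C ((n.factorial : ℚ)⁻¹) * G k n))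
      * (expPS + 1) ^ k
      = (PowerSeries.X * (PowerSeries.mk fun n => Polynomial.C ((n.factorial : ℚ)⁻¹) * G k n))
        * (expPS + 1) ^ k := by
    rw [h, show (2*PowerSeries.X)^k * (PowerSeries.X*expXPS)
      = PowerSeries.X * ((2*PowerSeries.X)^k * expXPS) by ring, ← hG k]; ring
  have h3 := mul_right_cancel₀ (expPS1_ne_zero k) h2
  have h4 := congrArg (PowerSeries.coeff (m+1)) h3
  rw [PowerSeries.coeff_succ_X_mul] at h4
  simp only [Dmap, PowerSeries.coeff_mk, derivative_mul, derivative_C, zero_mul, zero_add] at h4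
  apply mul_left_cancel₀ (a := Polynomial.C ((((m:ℕ)+1).factorial : ℚ)⁻¹)) (by
    simp [Nat.factorial_ne_zero])
  rw [h4, ← mul_assoc, ← Polynomial.C_mul]
  congr 1
  rw [Nat.factorial_succ]
  have hf : (m.factorial : ℚ) ≠ 0 := Nat.cast_ne_zero.mpr m.factorial_ne_zero
  push_cast
  field_simp

theorem genocchi_poly_iterated_deriv (G : ℕ → ℕ → Polynomial ℚ) (hG : IsGenocchi G)
    (n k : ℕ) (hk : 1 ≤ k)
    (p : Polynomial ℚ)
    (hp : p = ∑ l ∈ Finset.Icc k (n + k), G k l * Polynomial.X ^ (n + k - l))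
    (j : ℕ) (hj : j ≤ n + 1) :
    derivative^[j] p
      = Polynomial.C ((Nat.descFactorial (n + k + 1) j : ℚ)) *
        ∑ l ∈ Finset.Icc (k + j) (n + k), G k (l - j) * Polynomial.X ^ (n + k - l) := by
  have hvan : G k (k - 1) = 0 := genocchi_vanish G hG k (k-1) (by omega)
  have hder : ∀ m, Polynomial.derivative (G k (m+1)) = Polynomial.C ((m:ℚ)+1) * G k m :=
    genocchi_deriv G hG k
  set q : ℕ → Polynomial ℚ :=
    fun j => ∑ i ∈ range (n+1-j), G k (k+i) * Polynomial.X ^ (n-j-i) with hq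
  have hIcc : ∀ j, (∑ l ∈ Finset.Icc (k+j) (n+k), G k (l-j) * Polynomial.X ^ (n+k-l)) = q j := by
    intro j
    rw [← Finset.Ico_add_one_right_eq_Icc, Finset.sum_Ico_eq_sum_range]
    rw [show n + k + 1 - (k + j) = n + 1 - j by omega]
    apply Finset.sum_congr rfl
    intro i hi
    rw [show k + j + i - j = k + i by omega, show n + k - (k + j + i) = n - j - i by omega]
  have hstep : ∀ j, j ≤ n → Polynomial.derivative (q j)
      = Polynomial.C (((n + k + 1 - j : ℕ) : ℚ)) * q (j+1) := by
    intro j hjn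
    have hd0 : Polynomial.derivative (G k (k+0)) = 0 := by
      rw [show k + 0 = (k-1) + 1 by omega, hder, hvan, mul_zero]
    have h1 : n + 1 - j = (n - j) + 1 := by omega
    have h2 : n + 1 - (j+1) = n - j := by omega
    simp only [hq, h1, h2]
    rw [derivative_sum, Finset.mul_sum]
    have lhs_eq : ∀ i ∈ range ((n-j)+1),
        Polynomial.derivative (G k (k+i) * Polynomial.X ^ (n-j-i))
        = Polynomial.derivative (G k (k+i)) * Polynomial.X ^ (n-j-i)
          + Polynomial.C ((n-j-i : ℕ):ℚ) * G k (k+i) * Polynomial.X ^ (n-j-i-1) := by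
      intro i hi
      rw [derivative_mul, derivative_X_pow]; ring
    rw [Finset.sum_congr rfl lhs_eq, Finset.sum_add_distrib,
      Finset.sum_range_succ' (fun i => Polynomial.derivative (G k (k+i))
        * Polynomial.X ^ (n-j-i)) (n-j),
      hd0, zero_mul, add_zero,
      Finset.sum_range_succ (fun i => Polynomial.C ((n-j-i:ℕ):ℚ) * G k (k+i)
        * Polynomial.X ^ (n-j-i-1)) (n-j),
      show ((n-j-(n-j):ℕ):ℚ) = 0 by simp, map_zero, zero_mul, zero_mul, add_zero,
      ← Finset.sum_add_distrib]
    apply Finset.sum_congr rfl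
    intro i hi
    rw [Finset.mem_range] at hi
    rw [show k + (i+1) = (k+i) + 1 by ring, hder,
      show n - j - (i+1) = n - j - i - 1 by omega,
      show n - (j+1) - i = n - j - i - 1 by omega]
    rw [show Polynomial.C ((↑(k+i):ℚ)+1) * G k (k+i) * Polynomial.X ^ (n-j-i-1)
          + Polynomial.C ((n-j-i:ℕ):ℚ) * G k (k+i) * Polynomial.X ^ (n-j-i-1)
        = (Polynomial.C ((↑(k+i):ℚ)+1) + Polynomial.C ((n-j-i:ℕ):ℚ))
          * (G k (k+i) * Polynomial.X ^ (n-j-i-1)) by ring, ← map_add]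
    congr 2
    rw [show (n - j - i : ℕ) = n - (j+i) by omega, Nat.cast_sub (by omega),
      Nat.cast_sub (by omega)]
    push_cast
    ring
  have main : ∀ j, j ≤ n+1 → derivative^[j] p
      = Polynomial.C ((Nat.descFactorial (n+k+1) j : ℚ)) * q j := by
    intro j
    induction j with
    | zero =>
      intro _
      have h0 := hIcc 0
      simp only [Nat.add_zero, Nat.sub_zero] at h0
      rw [Function.iterate_zero, id_eq, hp, Nat.descFactorial_zero, Nat.cast_one, map_one,
        one_mul, ← h0]
    | succ j ih =>
      intro hj1
      rw [Function.iterate_succ_apply', ih (by omega), derivative_mul, derivative_C, zero_mul,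
        zero_add, hstep j (by omega), ← mul_assoc, ← map_mul]
      congr 2
      rw [Nat.descFactorial_succ, Nat.cast_mul, Nat.cast_sub (by omega)]
      push_cast
      ring
  rw [hIcc j]
  exact main j hj
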